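/- Let R be a commutative ring and n a positive integer. The formal power series ring R⟦x⟧ is n-strongly clean if and only if R is n-strongly clean. -/

import Mathlib

/-- `x` is a sum of an idempotent and `n` units, the idempotent commuting with each unit. -/
def IsNStronglyClean {R : Type*} [Ring R] (n : ℕ) (x : R) : Prop :=
  ∃ (e : R) (u : Fin n → Rˣ), IsIdempotentElem e ∧ (∀ i, Commute e (u i)) ∧
    x = e + ∑ i, (u i : R)

/-- A ring is `n`-strongly clean if every element is `n`-strongly clean. -/
def IsNStronglyCleanRing (R : Type*) [Ring R] (n : ℕ) : Prop :=
  ∀ x : R, IsNStronglyClean n x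

theorem powerSeries_nStronglyClean_iff {R : Type*} [CommRing R] (n : ℕ) (hn : 0 < n) :
    IsNStronglyCleanRing (PowerSeries R) n ↔ IsNStronglyCleanRing R n := by
  constructor
  · intro h r
    obtain ⟨e, u, he, -, heq⟩ := h (PowerSeries.C (R := R) r)
    refine ⟨PowerSeries.constantCoeff (R := R) e,
      fun i => Units.map (PowerSeries.constantCoeff (R := R)) (u i), he.map _, fun i => mul_comm _ _, ?_⟩
    have := congrArg (PowerSeries.constantCoeff (R := R)) heq
    simpa using this
  · intro h f
    obtain ⟨m, rfl⟩ := Nat.exists_eq_succ_of_ne_zero hn.ne'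
    obtain ⟨e, u, he, -, heq⟩ := h (PowerSeries.constantCoeff (R := R) f)
    set g : PowerSeries R := f - PowerSeries.C (R := R) e - ∑ i : Fin m, PowerSeries.C (R := R) (u i.succ)
    have hg : PowerSeries.constantCoeff (R := R) g = (u 0 : R) := by
      simp only [g, map_sub, map_sum, PowerSeries.constantCoeff_C, heq, Fin.sum_univ_succ]
      abel
    have hgu : IsUnit g := PowerSeries.isUnit_iff_constantCoeff.mpr (hg ▸ (u 0).isUnit)
    refine ⟨PowerSeries.C (R := R) e,
      Fin.cons hgu.unit (fun i => Units.map (PowerSeries.C (R := R)) (u i.succ)),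
      ?_, fun i => mul_comm _ _, ?_⟩
    · simpa [IsIdempotentElem, ← map_mul] using congrArg (PowerSeries.C (R := R)) he
    · rw [Fin.sum_univ_succ]
      simp only [Fin.cons_zero, Fin.cons_succ, IsUnit.unit_spec, Units.coe_map,
        RingHom.toMonoidHom_eq_coe, MonoidHom.coe_coe]
      simp only [g]
      abel
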